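/- Let A, B, C : ℝ → ℝ be twice continuously differentiable, let tₙ ∈ ℝ, let q : ℝ → ℝ satisfy q′(t) = A(q(t)) + B(q(t)) + C(q(t)) for all t. Let q_A, q_B : ℝ → ℝ satisfy q_A′(s) = A(q_A(s)), q_B′(s) = B(q_B(s)) with q_A(0) = q_B(0) = q(tₙ), and let q_C : ℝ → ℝ → ℝ be the two-parameter flow of C, all with sufficient smoothness near the relevant points. Define the revised update F^{Rev}(Δt) = q_C(Δt, q(tₙ) + (q_A(Δt) − q(tₙ)) + (q_B(Δt) − q(tₙ))). Then F^{Rev}(Δt) − q(tₙ + Δt) = (Δt²/2)·[A′(q(tₙ))·(−B(q(tₙ)) − C(q(tₙ))) + B′(q(tₙ))·(−A(q(tₙ)) − C(q(tₙ))) + C′(q(tₙ))·(A(q(tₙ)) + B(q(tₙ)))] + O(Δt³) as Δt → 0. -/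

import Mathlib

open Filter Asymptotics Set

lemma mvt_abs (f f' : ℝ → ℝ) (x M : ℝ)
    (hd : ∀ s ∈ uIcc (0:ℝ) x, HasDerivAt f (f' s) s)
    (hb : ∀ s ∈ uIcc (0:ℝ) x, |f' s| ≤ M) : |f x - f 0| ≤ M * |x| := by
  have := Convex.norm_image_sub_le_of_norm_hasDerivWithin_le
    (f := f) (f' := f') (s := uIcc (0:ℝ) x) (C := M)
    (fun s hs => (hd s hs).hasDerivWithinAt) hb (convex_uIcc _ _)
    (left_mem_uIcc) (right_mem_uIcc)
  simpa using this

lemma abs_le_of_mem_uIcc {x s : ℝ} (hs : s ∈ uIcc (0:ℝ) x) : |s| ≤ |x| := by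
  rcases le_total 0 x with h | h
  · rw [uIcc_of_le h] at hs; rw [abs_of_nonneg hs.1, abs_of_nonneg h]; exact hs.2
  · rw [uIcc_of_ge h] at hs; rw [abs_of_nonpos hs.2, abs_of_nonpos h]; exact neg_le_neg hs.1

lemma step_isBigO (f f' : ℝ → ℝ) (n : ℕ)
    (hd : ∀ᶠ x in nhds (0:ℝ), HasDerivAt f (f' x) x) (h0 : f 0 = 0)
    (hO : f' =O[nhds (0:ℝ)] fun x => x ^ n) :
    f =O[nhds (0:ℝ)] fun x => x ^ (n+1) := by
  rw [isBigO_iff] at hO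
  obtain ⟨c, hc⟩ := hO
  obtain ⟨δ, hδ, hball⟩ := Metric.eventually_nhds_iff.mp (hd.and hc)
  rw [isBigO_iff]
  refine ⟨max c 0, Metric.eventually_nhds_iff.mpr ⟨δ, hδ, fun x hx => ?_⟩⟩
  have hsub : ∀ s ∈ uIcc (0:ℝ) x, dist s 0 < δ := by
    intro s hs
    have := abs_le_of_mem_uIcc hs
    simp only [Real.dist_eq, sub_zero] at hx ⊢
    exact lt_of_le_of_lt this hx
  have key := mvt_abs f f' x (max c 0 * |x| ^ n)
    (fun s hs => (hball (hsub s hs)).1)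
    (fun s hs => by
      have h1 := (hball (hsub s hs)).2
      simp only [Real.norm_eq_abs, abs_pow] at h1 ⊢
      calc |f' s| ≤ c * |s| ^ n := h1
        _ ≤ max c 0 * |s| ^ n := by
            apply mul_le_mul_of_nonneg_right (le_max_left _ _) (pow_nonneg (abs_nonneg _) _)
        _ ≤ max c 0 * |x| ^ n := by
            apply mul_le_mul_of_nonneg_left _ (le_max_right _ _)
            exact pow_le_pow_left₀ (abs_nonneg _) (abs_le_of_mem_uIcc hs) _)
  rw [h0, sub_zero] at key
  simp only [Real.norm_eq_abs, abs_pow]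
  calc |f x| ≤ max c 0 * |x| ^ n * |x| := key
    _ = max c 0 * |x| ^ (n+1) := by ring

lemma point_isBigO (f : ℝ → ℝ) (h : DifferentiableAt ℝ f 0) :
    (fun x => f x - f 0) =O[nhds (0:ℝ)] fun x => x ^ 1 := by
  have := h.hasFDerivAt.isBigO_sub
  simpa using this

lemma taylor1_isBigO (f f' : ℝ → ℝ)
    (h1 : ∀ᶠ x in nhds (0:ℝ), HasDerivAt f (f' x) x)
    (h2 : DifferentiableAt ℝ f' 0) :
    (fun x => f x - f 0 - f' 0 * x) =O[nhds (0:ℝ)] fun x => x ^ 2 := by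
  apply step_isBigO _ (fun x => f' x - f' 0) 1
  · filter_upwards [h1] with x hx
    exact ((hx.sub_const (f 0)).sub ((hasDerivAt_id x).const_mul (f' 0))).congr_deriv (by ring)
  · simp
  · exact point_isBigO f' h2

lemma taylor2_isBigO (f f' f'' : ℝ → ℝ)
    (h1 : ∀ᶠ x in nhds (0:ℝ), HasDerivAt f (f' x) x)
    (h2 : ∀ᶠ x in nhds (0:ℝ), HasDerivAt f' (f'' x) x)
    (h3 : DifferentiableAt ℝ f'' 0) :
    (fun x => f x - f 0 - f' 0 * x - f'' 0 * x ^ 2 / 2) =O[nhds (0:ℝ)] fun x => x ^ 3 := by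
  apply step_isBigO _ (fun x => f' x - f' 0 - f'' 0 * x) 2
  · filter_upwards [h1] with x hx
    have hp : HasDerivAt (fun x : ℝ => f'' 0 * x ^ 2 / 2) (f'' 0 * x) x := by
      have := ((hasDerivAt_pow 2 x).const_mul (f'' 0)).div_const 2
      refine this.congr_deriv ?_
      ring
    have := ((hx.sub_const (f 0)).sub ((hasDerivAt_id x).const_mul (f' 0))).sub hp
    refine this.congr_deriv ?_
    ring
  · simp
  · exact taylor1_isBigO f' f'' h2 h3

theorem revised_scheme_local_truncation_error
    (A B C q qA qB : ℝ → ℝ) (qC : ℝ → ℝ → ℝ) (tn : ℝ)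
    (hA : ContDiff ℝ 2 A) (hB : ContDiff ℝ 2 B) (hC : ContDiff ℝ 2 C)
    (hq : ∀ t, HasDerivAt q (A (q t) + B (q t) + C (q t)) t)
    (hqA : ∀ s, HasDerivAt qA (A (qA s)) s)
    (hqB : ∀ s, HasDerivAt qB (B (qB s)) s)
    (hqA0 : qA 0 = q tn) (hqB0 : qB 0 = q tn)
    (hqC : ∀ φ s, HasDerivAt (fun u => qC u φ) (C (qC s φ)) s)
    (hqC0 : ∀ φ, qC 0 φ = φ)
    (hqAsmooth : ContDiffAt ℝ 2 qA 0)
    (hqBsmooth : ContDiffAt ℝ 2 qB 0)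
    (hqCsmooth : ContDiffAt ℝ 2 (fun p : ℝ × ℝ => qC p.1 p.2) (0, q tn)) :
    (fun Δt : ℝ =>
        (qC Δt (q tn + (qA Δt - q tn) + (qB Δt - q tn)) - q (tn + Δt))
          - Δt ^ 2 / 2 *
              (deriv A (q tn) * (-B (q tn) - C (q tn))
                + deriv B (q tn) * (-A (q tn) - C (q tn))
                + deriv C (q tn) * (A (q tn) + B (q tn))))
      =O[nhds (0:ℝ)] (fun Δt : ℝ => Δt ^ 3) := by
  -- regularity facts
  have hAd : Differentiable ℝ A := hA.differentiable two_ne_zero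
  have hBd : Differentiable ℝ B := hB.differentiable two_ne_zero
  have hCd : Differentiable ℝ C := hC.differentiable two_ne_zero
  have hA1 : ContDiff ℝ 1 (deriv A) :=
    (contDiff_succ_iff_deriv.mp (show ContDiff ℝ (1+1) A by norm_num [hA])).2.2
  have hB1 : ContDiff ℝ 1 (deriv B) :=
    (contDiff_succ_iff_deriv.mp (show ContDiff ℝ (1+1) B by norm_num [hB])).2.2
  have hC1 : ContDiff ℝ 1 (deriv C) :=
    (contDiff_succ_iff_deriv.mp (show ContDiff ℝ (1+1) C by norm_num [hC])).2.2
  have hA1d : Differentiable ℝ (deriv A) := hA1.differentiable one_ne_zero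
  have hB1d : Differentiable ℝ (deriv B) := hB1.differentiable one_ne_zero
  have hC1d : Differentiable ℝ (deriv C) := hC1.differentiable one_ne_zero
  have hC2c : Continuous (deriv (deriv C)) := hC1.continuous_deriv le_rfl
  have hqAd : Differentiable ℝ qA := fun x => (hqA x).differentiableAt
  have hqBd : Differentiable ℝ qB := fun x => (hqB x).differentiableAt
  have hqd : Differentiable ℝ q := fun x => (hq x).differentiableAt
  -- the curve φ (written out explicitly)
  have hφd : ∀ x : ℝ, HasDerivAt (fun x => q tn + (qA x - q tn) + (qB x - q tn))
      (A (qA x) + B (qB x)) x := by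
    intro x
    have := (((hqA x).sub_const (q tn)).const_add (q tn)).add ((hqB x).sub_const (q tn))
    exact this
  have hφdiff : Differentiable ℝ (fun x => q tn + (qA x - q tn) + (qB x - q tn)) :=
    fun x => (hφd x).differentiableAt
  have hφ0 : q tn + (qA 0 - q tn) + (qB 0 - q tn) = q tn := by
    rw [hqA0, hqB0]; ring
  -- Piece 1
  have P1 : (fun x => qA x - q tn - A (q tn) * x - deriv A (q tn) * A (q tn) * x ^ 2 / 2)
      =O[nhds (0:ℝ)] (fun x => x ^ 3) := by
    have := taylor2_isBigO qA (fun x => A (qA x)) (fun x => deriv A (qA x) * A (qA x))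
      (Eventually.of_forall hqA)
      (Eventually.of_forall fun x => (hAd (qA x)).hasDerivAt.comp x (hqA x))
      (((hA1d (qA 0)).comp 0 (hqAd 0)).mul ((hAd (qA 0)).comp 0 (hqAd 0)))
    simpa only [hqA0] using this
  -- Piece 2
  have P2 : (fun x => qB x - q tn - B (q tn) * x - deriv B (q tn) * B (q tn) * x ^ 2 / 2)
      =O[nhds (0:ℝ)] (fun x => x ^ 3) := by
    have := taylor2_isBigO qB (fun x => B (qB x)) (fun x => deriv B (qB x) * B (qB x))
      (Eventually.of_forall hqB)
      (Eventually.of_forall fun x => (hBd (qB x)).hasDerivAt.comp x (hqB x))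
      (((hB1d (qB 0)).comp 0 (hqBd 0)).mul ((hBd (qB 0)).comp 0 (hqBd 0)))
    simpa only [hqB0] using this
  -- Piece 3 : the exact solution
  have hsh : ∀ x : ℝ, HasDerivAt (fun x => q (tn + x))
      (A (q (tn + x)) + B (q (tn + x)) + C (q (tn + x))) x := by
    intro x
    have := (hq (tn + x)).comp x ((hasDerivAt_id x).const_add tn)
    exact this.congr_deriv (by ring)
  have hshd : Differentiable ℝ (fun x => q (tn + x)) := fun x => (hsh x).differentiableAt
  have P3 : (fun x => q (tn + x) - q tn - (A (q tn) + B (q tn) + C (q tn)) * x -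
      (deriv A (q tn) + deriv B (q tn) + deriv C (q tn)) * (A (q tn) + B (q tn) + C (q tn))
        * x ^ 2 / 2) =O[nhds (0:ℝ)] (fun x => x ^ 3) := by
    have := taylor2_isBigO (fun x => q (tn + x))
      (fun x => A (q (tn + x)) + B (q (tn + x)) + C (q (tn + x)))
      (fun x => (deriv A (q (tn + x)) + deriv B (q (tn + x)) + deriv C (q (tn + x))) *
        (A (q (tn + x)) + B (q (tn + x)) + C (q (tn + x))))
      (Eventually.of_forall hsh)
      (Eventually.of_forall fun x => by
        have h1 := (hAd (q (tn + x))).hasDerivAt.comp x (hsh x)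
        have h2 := (hBd (q (tn + x))).hasDerivAt.comp x (hsh x)
        have h3 := (hCd (q (tn + x))).hasDerivAt.comp x (hsh x)
        have := (h1.add h2).add h3
        refine this.congr_deriv ?_
        ring)
      (by
        have h1 : DifferentiableAt ℝ (fun x => q (tn + x)) 0 := hshd 0
        exact (((((hA1d _).comp 0 h1).add ((hB1d _).comp 0 h1)).add
          ((hC1d _).comp 0 h1)).mul ((((hAd _).comp 0 h1).add ((hBd _).comp 0 h1)).add
          ((hCd _).comp 0 h1))))
    simpa only [add_zero] using this
  -- Piece 4
  have T4 : (fun x => C (q tn + (qA x - q tn) + (qB x - q tn)) - C (q tn) -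
      deriv C (q tn) * (A (q tn) + B (q tn)) * x) =O[nhds (0:ℝ)] (fun x => x ^ 2) := by
    have := taylor1_isBigO (fun x => C (q tn + (qA x - q tn) + (qB x - q tn)))
      (fun x => deriv C (q tn + (qA x - q tn) + (qB x - q tn)) * (A (qA x) + B (qB x)))
      (Eventually.of_forall fun x => (hCd _).hasDerivAt.comp x (hφd x))
      (((hC1d _).comp 0 (hφdiff 0)).mul
        (((hAd _).comp 0 (hqAd 0)).add ((hBd _).comp 0 (hqBd 0))))
    simpa only [hqA0, hqB0, sub_self, add_zero] using this
  have P4 : (fun x => x * (C (q tn + (qA x - q tn) + (qB x - q tn)) - C (q tn) -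
      deriv C (q tn) * (A (q tn) + B (q tn)) * x)) =O[nhds (0:ℝ)] (fun x => x ^ 3) := by
    have := (isBigO_refl (fun x : ℝ => x) (nhds (0:ℝ))).mul T4
    have heq : (fun x : ℝ => x ^ 3) = fun x : ℝ => x * x ^ 2 := by funext x; ring
    rw [heq]; exact this
  -- Piece 5
  have T5 : (fun x => deriv C (q tn + (qA x - q tn) + (qB x - q tn)) *
      C (q tn + (qA x - q tn) + (qB x - q tn)) - deriv C (q tn) * C (q tn))
      =O[nhds (0:ℝ)] (fun x => x ^ 1) := by
    have := point_isBigO (fun x => deriv C (q tn + (qA x - q tn) + (qB x - q tn)) *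
      C (q tn + (qA x - q tn) + (qB x - q tn)))
      (((hC1d _).comp 0 (hφdiff 0)).mul ((hCd _).comp 0 (hφdiff 0)))
    simpa only [hqA0, hqB0, sub_self, add_zero] using this
  have P5 : (fun x => x ^ 2 / 2 * (deriv C (q tn + (qA x - q tn) + (qB x - q tn)) *
      C (q tn + (qA x - q tn) + (qB x - q tn)) - deriv C (q tn) * C (q tn)))
      =O[nhds (0:ℝ)] (fun x => x ^ 3) := by
    have h2 : (fun x : ℝ => x ^ 2 / 2) =O[nhds (0:ℝ)] (fun x : ℝ => x ^ 2) := by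
      have := (isBigO_refl (fun x : ℝ => x ^ 2) (nhds (0:ℝ))).const_mul_left (1/2 : ℝ)
      refine this.congr_left fun x => by ring
    have := h2.mul T5
    have heq : (fun x : ℝ => x ^ 3) = fun x : ℝ => x ^ 2 * x ^ 1 := by funext x; ring
    rw [heq]; exact this
  -- Piece 6
  have hg1d : ∀ y : ℝ, HasDerivAt (fun z => deriv C z * C z)
      (deriv (deriv C) y * C y + deriv C y * deriv C y) y :=
    fun y => ((hC1d y).hasDerivAt).mul (hCd y).hasDerivAt
  obtain ⟨u, hu_nhds, hu⟩ : ∃ u ∈ nhds ((0:ℝ), q tn),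
      ContDiffOn ℝ 2 (fun p : ℝ × ℝ => qC p.1 p.2) u :=
    hqCsmooth.contDiffOn le_rfl (by norm_num)
  obtain ⟨ε, hε, hball⟩ : ∃ ε > 0, Metric.closedBall ((0:ℝ), q tn) ε ⊆ u := by
    rcases Metric.mem_nhds_iff.mp hu_nhds with ⟨r, hr, h⟩
    exact ⟨r/2, by positivity, (Metric.closedBall_subset_ball (by linarith)).trans h⟩
  have hqCcont : ContinuousOn (fun p : ℝ × ℝ => qC p.1 p.2)
      (Metric.closedBall ((0:ℝ), q tn) ε) := (hu.continuousOn).mono hball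
  have hΨ : ContinuousOn (fun p : ℝ × ℝ =>
      (deriv (deriv C) (qC p.1 p.2) * C (qC p.1 p.2) +
        deriv C (qC p.1 p.2) * deriv C (qC p.1 p.2)) * C (qC p.1 p.2))
      (Metric.closedBall ((0:ℝ), q tn) ε) := by
    have hCc : Continuous C := hC.continuous
    have hC1c : Continuous (deriv C) := hC1.continuous
    exact (((hC2c.comp_continuousOn hqCcont).mul (hCc.comp_continuousOn hqCcont)).add
      ((hC1c.comp_continuousOn hqCcont).mul (hC1c.comp_continuousOn hqCcont))).mul
      (hCc.comp_continuousOn hqCcont)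
  obtain ⟨M, hM⟩ := (isCompact_closedBall ((0:ℝ), q tn) ε).exists_bound_of_continuousOn hΨ
  have hM0 : 0 ≤ M := le_trans (norm_nonneg _) (hM (0, q tn) (Metric.mem_closedBall_self hε.le))
  have hmem : ∀ s y : ℝ, |s| ≤ ε → |y - q tn| ≤ ε →
      ((s, y) : ℝ × ℝ) ∈ Metric.closedBall ((0:ℝ), q tn) ε := by
    intro s y h1 h2
    rw [Metric.mem_closedBall, Prod.dist_eq]
    simp only [Real.dist_eq, sub_zero]
    exact sup_le h1 h2
  have key : ∀ x y : ℝ, |x| ≤ ε → |y - q tn| ≤ ε →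
      |qC x y - y - x * C y - x ^ 2 / 2 * (deriv C y * C y)| ≤ M * |x| ^ 3 := by
    intro x y hx hy
    -- Step A
    have stepA : ∀ s ∈ uIcc (0:ℝ) x,
        |deriv C (qC s y) * C (qC s y) - deriv C y * C y| ≤ M * |x| := by
      intro s hs
      have hsx : |s| ≤ |x| := abs_le_of_mem_uIcc hs
      have h := mvt_abs (fun τ => deriv C (qC τ y) * C (qC τ y))
        (fun τ => (deriv (deriv C) (qC τ y) * C (qC τ y) +
          deriv C (qC τ y) * deriv C (qC τ y)) * C (qC τ y)) s M
        (fun τ hτ => by have := (hg1d (qC τ y)).comp τ (hqC y τ); exact this)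
        (fun τ hτ => by
          have := hM (τ, y) (hmem τ y ((abs_le_of_mem_uIcc hτ).trans (hsx.trans hx)) hy)
          simpa [abs_mul] using this)
      have e : (fun τ => deriv C (qC τ y) * C (qC τ y)) s -
          (fun τ => deriv C (qC τ y) * C (qC τ y)) 0 =
          deriv C (qC s y) * C (qC s y) - deriv C y * C y := by
        simp only [hqC0]
      rw [e] at h
      calc |deriv C (qC s y) * C (qC s y) - deriv C y * C y| ≤ M * |s| := h
        _ ≤ M * |x| := mul_le_mul_of_nonneg_left hsx hM0
    -- Step B
    have stepB : ∀ s ∈ uIcc (0:ℝ) x,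
        |C (qC s y) - C y - s * (deriv C y * C y)| ≤ M * |x| * |x| := by
      intro s hs
      have hsx : |s| ≤ |x| := abs_le_of_mem_uIcc hs
      have hsub : uIcc (0:ℝ) s ⊆ uIcc (0:ℝ) x :=
        uIcc_subset_uIcc left_mem_uIcc hs
      have h := mvt_abs (fun τ => C (qC τ y) - τ * (deriv C y * C y))
        (fun τ => deriv C (qC τ y) * C (qC τ y) - deriv C y * C y) s (M * |x|)
        (fun τ hτ => ((hCd (qC τ y)).hasDerivAt.comp τ (hqC y τ)).sub
          (hasDerivAt_mul_const (deriv C y * C y)))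
        (fun τ hτ => stepA τ (hsub hτ))
      have e : (fun τ => C (qC τ y) - τ * (deriv C y * C y)) s -
          (fun τ => C (qC τ y) - τ * (deriv C y * C y)) 0 =
          C (qC s y) - C y - s * (deriv C y * C y) := by
        simp only [hqC0]; ring
      rw [e] at h
      have h' : |C (qC s y) - C y - s * (deriv C y * C y)| ≤ M * |x| * |s| := h
      calc |C (qC s y) - C y - s * (deriv C y * C y)| ≤ M * |x| * |s| := h'
        _ ≤ M * |x| * |x| := mul_le_mul_of_nonneg_left hsx (by positivity)
    -- Step C
    have h := mvt_abs (fun s => qC s y - y - s * C y - s ^ 2 / 2 * (deriv C y * C y))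
      (fun s => C (qC s y) - C y - s * (deriv C y * C y)) x (M * |x| * |x|)
      (fun s hs => by
        have hp : HasDerivAt (fun s : ℝ => s ^ 2 / 2 * (deriv C y * C y))
            (s * (deriv C y * C y)) s := by
          have := ((hasDerivAt_pow 2 s).div_const 2).mul_const (deriv C y * C y)
          refine this.congr_deriv ?_
          ring
        exact ((((hqC y s).sub_const y).sub (hasDerivAt_mul_const (C y))).sub hp))
      stepB
    have e : (fun s => qC s y - y - s * C y - s ^ 2 / 2 * (deriv C y * C y)) x -
        (fun s => qC s y - y - s * C y - s ^ 2 / 2 * (deriv C y * C y)) 0 =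
        qC x y - y - x * C y - x ^ 2 / 2 * (deriv C y * C y) := by
      simp only [hqC0]; ring
    rw [e] at h
    calc |qC x y - y - x * C y - x ^ 2 / 2 * (deriv C y * C y)| ≤ M * |x| * |x| * |x| := h
      _ = M * |x| ^ 3 := by ring
  have P6 : (fun x => qC x (q tn + (qA x - q tn) + (qB x - q tn)) -
      (q tn + (qA x - q tn) + (qB x - q tn)) -
      x * C (q tn + (qA x - q tn) + (qB x - q tn)) -
      x ^ 2 / 2 * (deriv C (q tn + (qA x - q tn) + (qB x - q tn)) *
        C (q tn + (qA x - q tn) + (qB x - q tn))))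
      =O[nhds (0:ℝ)] (fun x => x ^ 3) := by
    rw [isBigO_iff]
    refine ⟨M, ?_⟩
    have hev1 : ∀ᶠ x in nhds (0:ℝ), |x| ≤ ε := by
      filter_upwards [Metric.ball_mem_nhds (0:ℝ) hε] with x hx
      rw [Metric.mem_ball, Real.dist_eq, sub_zero] at hx
      exact hx.le
    have hev2 : ∀ᶠ x in nhds (0:ℝ), |q tn + (qA x - q tn) + (qB x - q tn) - q tn| ≤ ε := by
      have hc : ContinuousAt (fun x => q tn + (qA x - q tn) + (qB x - q tn)) 0 :=
        (hφdiff 0).continuousAt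
      have := Metric.tendsto_nhds.mp hc ε hε
      simp only [hqA0, hqB0, sub_self, add_zero] at this
      filter_upwards [this] with x hx
      rw [Real.dist_eq] at hx
      exact hx.le
    filter_upwards [hev1, hev2] with x hx1 hx2
    have := key x _ hx1 hx2
    simpa only [Real.norm_eq_abs, abs_pow] using this
  -- Assemble
  have Heq : (fun Δt : ℝ =>
        (qC Δt (q tn + (qA Δt - q tn) + (qB Δt - q tn)) - q (tn + Δt))
          - Δt ^ 2 / 2 *
              (deriv A (q tn) * (-B (q tn) - C (q tn))
                + deriv B (q tn) * (-A (q tn) - C (q tn))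
                + deriv C (q tn) * (A (q tn) + B (q tn)))) =
      fun x =>
        (qA x - q tn - A (q tn) * x - deriv A (q tn) * A (q tn) * x ^ 2 / 2) +
        (qB x - q tn - B (q tn) * x - deriv B (q tn) * B (q tn) * x ^ 2 / 2) -
        (q (tn + x) - q tn - (A (q tn) + B (q tn) + C (q tn)) * x -
          (deriv A (q tn) + deriv B (q tn) + deriv C (q tn)) *
            (A (q tn) + B (q tn) + C (q tn)) * x ^ 2 / 2) +
        (x * (C (q tn + (qA x - q tn) + (qB x - q tn)) - C (q tn) -
          deriv C (q tn) * (A (q tn) + B (q tn)) * x)) +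
        (x ^ 2 / 2 * (deriv C (q tn + (qA x - q tn) + (qB x - q tn)) *
          C (q tn + (qA x - q tn) + (qB x - q tn)) - deriv C (q tn) * C (q tn))) +
        (qC x (q tn + (qA x - q tn) + (qB x - q tn)) -
          (q tn + (qA x - q tn) + (qB x - q tn)) -
          x * C (q tn + (qA x - q tn) + (qB x - q tn)) -
          x ^ 2 / 2 * (deriv C (q tn + (qA x - q tn) + (qB x - q tn)) *
            C (q tn + (qA x - q tn) + (qB x - q tn)))) := by
    funext x
    ring
  rw [Heq]
  exact ((((P1.add P2).sub P3).add P4).add P5).add P6
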